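/- arXiv:0908.4034 — 2 statements merged into one kernel-verified Lean document; each statement's English description precedes it below -/
import Mathlib

section
/- The Fibonacci word is Sturmian: its complexity function satisfies p(m) = m + 1 for every integer m ≥ 1. -/
open scoped Classical

/-- The golden ratio `Φ = (1 + √5)/2`. -/
noncomputable def Φ : ℝ := (1 + Real.sqrt 5) / 2

/-- The Fibonacci word `w : ℕ → {0,1}`: `w n = 0` iff `n + 1 = ⌊kΦ⌋` for some `k ≥ 1`
(the fixed point `abaababa…` of `a ↦ ab`, `b ↦ a`, with `a` encoded as `0` and `b` as `1`). -/
noncomputable def fibWord (n : ℕ) : Fin 2 :=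
  if ∃ k : ℕ, 1 ≤ k ∧ ((n : ℤ) + 1) = ⌊(k : ℝ) * Φ⌋ then 0 else 1

noncomputable def β : ℝ := 2 - Φ

lemma sqrt5_lt_3 : Real.sqrt 5 < 3 := by
  nlinarith [Real.sq_sqrt (by norm_num : (5:ℝ) ≥ 0), Real.sqrt_nonneg (5:ℝ)]

lemma two_lt_sqrt5 : (2:ℝ) < Real.sqrt 5 := by
  nlinarith [Real.sq_sqrt (by norm_num : (5:ℝ) ≥ 0), Real.sqrt_nonneg (5:ℝ)]

lemma β_irrational : Irrational β := by
  have h5 : Irrational (Real.sqrt 5) := by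
    have := Nat.Prime.irrational_sqrt (p := 5) (by norm_num)
    simpa using this
  have : Irrational ((2 - (1 + Real.sqrt 5) / 2 : ℝ)) := by
    have : (2 - (1 + Real.sqrt 5) / 2 : ℝ) = ((3/2 : ℚ) : ℝ) + (-1/2 : ℚ) * Real.sqrt 5 := by
      push_cast; ring
    rw [this]
    exact Irrational.ratCast_add _ (h5.ratCast_mul (q := -1/2) (by norm_num))
  simpa [β, Φ] using this

lemma β_pos : 0 < β := by
  have := sqrt5_lt_3; simp only [β, Φ]; linarith

lemma β_lt_one : β < 1 := by
  have := two_lt_sqrt5; simp only [β, Φ]; linarith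

-- key algebraic identity: Φ * β relation; we need 1/Φ = Φ - 1, i.e. Φ^2 = Φ + 1
lemma Φ_sq : Φ^2 = Φ + 1 := by
  have := Real.sq_sqrt (by norm_num : (5:ℝ) ≥ 0)
  simp only [Φ]; nlinarith

lemma Φ_pos : 0 < Φ := by have := two_lt_sqrt5; simp only [Φ]; linarith

-- α = Φ - 1 = 1/Φ
lemma inv_Φ : Φ⁻¹ = Φ - 1 := by
  have h : Φ * (Φ - 1) = 1 := by nlinarith [Φ_sq]
  exact inv_eq_of_mul_eq_one_right h

noncomputable def αg : ℝ := Φ - 1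

lemma β_eq : β = 1 - αg := by simp [β, αg]; ring

lemma αg_pos : 0 < αg := by have := two_lt_sqrt5; simp only [αg, Φ]; linarith
lemma αg_lt_one : αg < 1 := by have := sqrt5_lt_3; simp only [αg, Φ]; linarith

lemma αg_irrational : Irrational αg := by
  have h := β_irrational
  rw [β_eq] at h
  simpa using (h.ratCast_sub 1).neg

lemma nat_mul_αg_irrational {j : ℕ} (hj : 1 ≤ j) : Irrational ((j:ℝ) * αg) :=
  αg_irrational.natCast_mul (by omega)

lemma nat_mul_β_irrational {j : ℕ} (hj : 1 ≤ j) : Irrational ((j:ℝ) * β) :=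
  β_irrational.natCast_mul (by omega)

/-- floor of `j - x` for irrational `x`. -/
lemma floor_sub_irrational (j : ℤ) {x : ℝ} (hx : Irrational x) :
    ⌊(j:ℝ) - x⌋ = j - ⌊x⌋ - 1 := by
  rw [Int.floor_eq_iff]
  have h1 : (⌊x⌋ : ℝ) < x := lt_of_le_of_ne (Int.floor_le x) (by
    intro h; exact (hx.ne_int ⌊x⌋) h.symm)
  have h2 : x < ⌊x⌋ + 1 := Int.lt_floor_add_one x
  constructor
  · push_cast; linarith
  · push_cast; linarith

lemma floor_nat_β (j : ℕ) (hj : 1 ≤ j) : ⌊(j:ℝ) * β⌋ = (j:ℤ) - ⌊(j:ℝ) * αg⌋ - 1 := by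
  have : (j:ℝ) * β = (j:ℝ) - (j:ℝ) * αg := by rw [β_eq]; ring
  rw [this, show ((j:ℝ)) = ((j:ℤ):ℝ) by push_cast; ring]
  exact floor_sub_irrational _ (nat_mul_αg_irrational hj)

/-- the Beatty characterization -/
lemma fibWord_eq_floor (n : ℕ) :
    fibWord n = if ⌊((n:ℝ) + 2) * β⌋ = ⌊((n:ℝ) + 1) * β⌋ then 0 else 1 := by
  have hα : Φ⁻¹ = αg := by rw [inv_Φ]; rfl
  have hΦpos : (0:ℝ) < Φ := Φ_pos
  have key : (∃ k : ℕ, 1 ≤ k ∧ ((n : ℤ) + 1) = ⌊(k : ℝ) * Φ⌋) ↔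
      ⌊((n:ℝ) + 2) * αg⌋ = ⌊((n:ℝ) + 1) * αg⌋ + 1 := by
    have hirr1 : Irrational (((n:ℝ) + 1) * αg) := by
      have := nat_mul_αg_irrational (j := n+1) (by omega); push_cast at this; exact this
    have hirr2 : Irrational (((n:ℝ) + 2) * αg) := by
      have := nat_mul_αg_irrational (j := n+2) (by omega); push_cast at this; exact this
    constructor
    · rintro ⟨k, hk1, hk2⟩
      have hirrk : Irrational ((k:ℝ) * Φ) := by
        have : Irrational Φ := by
          have := αg_irrational; simpa [αg] using this.ratCast_add 1
        exact this.natCast_mul (by omega)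
      have hfl := Int.floor_le ((k:ℝ) * Φ)
      have hfu := Int.lt_floor_add_one ((k:ℝ) * Φ)
      rw [← hk2] at hfl hfu
      have hlt1 : ((n:ℝ) + 1) < (k:ℝ) * Φ := by
        have hne : ((k:ℝ) * Φ) ≠ ((n:ℝ)+1) := by
          intro h; exact hirrk.ne_int ((n:ℤ)+1) (by push_cast; linarith)
        have hle : ((n:ℝ)+1) ≤ (k:ℝ)*Φ := by push_cast at hfl ⊢; linarith
        exact lt_of_le_of_ne hle (Ne.symm hne)
      have hlt2 : (k:ℝ) * Φ < (n:ℝ) + 2 := by push_cast at hfu ⊢; linarith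
      -- multiply by αg = 1/Φ
      have e1 : ((n:ℝ) + 1) * αg < k := by
        rw [← hα]
        have h := mul_lt_mul_of_pos_right hlt1 (inv_pos.2 hΦpos)
        rwa [mul_assoc, mul_inv_cancel₀ hΦpos.ne', mul_one] at h
      have e2 : (k:ℝ) < ((n:ℝ) + 2) * αg := by
        rw [← hα]
        have h := mul_lt_mul_of_pos_right hlt2 (inv_pos.2 hΦpos)
        rwa [mul_assoc, mul_inv_cancel₀ hΦpos.ne', mul_one] at h
      have hk_le : (k:ℤ) ≤ ⌊((n:ℝ) + 2) * αg⌋ := Int.le_floor.2 (by exact_mod_cast e2.le)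
      have hk_gt : (⌊((n:ℝ) + 1) * αg⌋ : ℤ) < k := by
        have h0 := Int.floor_le (((n:ℝ) + 1) * αg)
        exact_mod_cast (by linarith : ((⌊((n:ℝ)+1)*αg⌋:ℝ)) < (k:ℝ))
      have hup : ⌊((n:ℝ) + 2) * αg⌋ ≤ ⌊((n:ℝ) + 1) * αg⌋ + 1 := by
        have : ((n:ℝ) + 2) * αg ≤ ((n:ℝ) + 1) * αg + 1 := by nlinarith [αg_lt_one, αg_pos]
        calc ⌊((n:ℝ) + 2) * αg⌋ ≤ ⌊((n:ℝ) + 1) * αg + 1⌋ := Int.floor_le_floor this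
          _ = ⌊((n:ℝ) + 1) * αg⌋ + 1 := Int.floor_add_one _
      omega
    · intro h
      set K : ℤ := ⌊((n:ℝ) + 2) * αg⌋ with hK
      have hK1 : 1 ≤ K := by
        have hn : (0:ℝ) ≤ (n:ℝ)+1 := by positivity
        have : (0:ℝ) ≤ ((n:ℝ)+1) * αg := by nlinarith [αg_pos]
        have h0 : (0:ℤ) ≤ ⌊((n:ℝ) + 1) * αg⌋ := Int.le_floor.2 (by exact_mod_cast this)
        omega
      refine ⟨K.toNat, by omega, ?_⟩
      have hcast : ((K.toNat : ℝ)) = (K:ℝ) := by exact_mod_cast congrArg Int.cast (Int.toNat_of_nonneg (by omega))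
      have hb1 : ((n:ℝ) + 1) * αg < K := by
        have := Int.floor_le (((n:ℝ)+1) * αg)
        have hne : ((n:ℝ)+1) * αg ≠ (⌊((n:ℝ)+1) * αg⌋ : ℝ) := fun hc => hirr1.ne_int _ hc
        have : ((n:ℝ)+1)*αg < ⌊((n:ℝ)+1) * αg⌋ + 1 := Int.lt_floor_add_one _
        push_cast [h]
        push_cast at this
        linarith
      have hb2 : (K:ℝ) < ((n:ℝ) + 2) * αg := by
        have := Int.floor_le (((n:ℝ)+2) * αg)
        have hne : ((n:ℝ)+2) * αg ≠ (K : ℝ) := fun hc => hirr2.ne_int _ hc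
        exact lt_of_le_of_ne this (Ne.symm hne)
      -- so n+1 ≤ KΦ... : from (n+1)αg < K < (n+2)αg, multiply by Φ
      have hg1 : ((n:ℝ) + 1) < K * Φ := by
        have := mul_lt_mul_of_pos_right hb1 hΦpos
        have hαΦ : αg * Φ = 1 := by rw [← hα]; field_simp
        nlinarith
      have hg2 : (K:ℝ) * Φ < ((n:ℝ) + 2) := by
        have := mul_lt_mul_of_pos_right hb2 hΦpos
        have hαΦ : αg * Φ = 1 := by rw [← hα]; field_simp
        nlinarith
      rw [eq_comm, Int.floor_eq_iff]
      constructor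
      · push_cast [hcast]; linarith
      · push_cast [hcast]; linarith
  -- now convert αg-floors to β-floors
  have f1 : ⌊((n:ℝ) + 1) * β⌋ = ((n:ℤ) + 1) - ⌊((n:ℝ)+1) * αg⌋ - 1 := by
    have := floor_nat_β (n+1) (by omega); push_cast at this ⊢
    convert this using 3 <;> ring
  have f2 : ⌊((n:ℝ) + 2) * β⌋ = ((n:ℤ) + 2) - ⌊((n:ℝ)+2) * αg⌋ - 1 := by
    have := floor_nat_β (n+2) (by omega); push_cast at this ⊢
    convert this using 3 <;> ring
  rw [fibWord]
  by_cases h : ∃ k : ℕ, 1 ≤ k ∧ ((n : ℤ) + 1) = ⌊(k : ℝ) * Φ⌋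
  · rw [if_pos h, if_pos]
    have := key.1 h
    omega
  · rw [if_neg h, if_neg]
    intro hc
    exact h (key.2 (by omega))

/-- The complexity function of the Fibonacci word: `fibComplexity m` is the number of distinct
blocks `(w k, w (k+1), …, w (k+m−1))`, `k ≥ 0`, of length `m`. -/
noncomputable def fibComplexity (m : ℕ) : ℕ :=
  Set.ncard {v : Fin m → Fin 2 | ∃ k : ℕ, ∀ i : Fin m, v i = fibWord (k + (i : ℕ))}

lemma orbit_dense' {a b : ℝ} (ha : 0 < a) (hb : b ≤ 1) (hab : a < b) :
    ∃ n : ℕ, 1 ≤ n ∧ a < Int.fract ((n:ℝ) * β) ∧ Int.fract ((n:ℝ) * β) < b := by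
  -- Step 1: the subgroup generated by β and 1 is dense in ℝ
  have hdense : Dense ((AddSubgroup.closure {β, 1} : AddSubgroup ℝ) : Set ℝ) := by
    rcases AddSubgroup.dense_or_cyclic (AddSubgroup.closure {β, 1}) with h | ⟨c, hc⟩
    · exact h
    · exfalso
      have hβ : β ∈ AddSubgroup.closure ({β, 1} : Set ℝ) :=
        AddSubgroup.subset_closure (by simp)
      have h1 : (1:ℝ) ∈ AddSubgroup.closure ({β, 1} : Set ℝ) :=
        AddSubgroup.subset_closure (by simp)
      rw [hc] at hβ h1
      obtain ⟨zb, hzb⟩ := AddSubgroup.mem_closure_singleton.1 hβ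
      obtain ⟨z1, hz1⟩ := AddSubgroup.mem_closure_singleton.1 h1
      have hz1ne : z1 ≠ 0 := by
        rintro rfl; simp at hz1
      have hcval : c = ((z1:ℝ))⁻¹ := by
        have : (z1:ℝ) * c = 1 := by rw [← hz1]; simp [zsmul_eq_mul]
        field_simp at this ⊢
        linarith
      have : β = ((zb / z1 : ℚ) : ℝ) := by
        rw [← hzb, hcval]
        push_cast
        rw [zsmul_eq_mul]
        field_simp
      exact β_irrational ⟨_, this.symm⟩
  -- Step 2: push to AddCircle 1
  haveI : Fact ((0:ℝ) < 1) := ⟨one_pos⟩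
  set π : ℝ → AddCircle (1:ℝ) := fun x => (x : AddCircle (1:ℝ)) with hπ
  have hπcont : Continuous π := AddCircle.continuous_mk' 1
  have hg : DenseRange (fun p : ℤ × ℤ => (p.1 • β + p.2 • (1:ℝ))) := by
    have hr : Set.range (fun p : ℤ × ℤ => (p.1 • β + p.2 • (1:ℝ)))
        = ((AddSubgroup.closure {β, 1} : AddSubgroup ℝ) : Set ℝ) := by
      ext x
      constructor
      · rintro ⟨⟨z1, z2⟩, rfl⟩
        exact AddSubgroup.add_mem _
          (AddSubgroup.zsmul_mem _ (AddSubgroup.subset_closure (by simp)) _)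
          (AddSubgroup.zsmul_mem _ (AddSubgroup.subset_closure (by simp)) _)
      · intro hx
        induction hx using AddSubgroup.closure_induction with
        | mem y hy =>
          simp only [Set.mem_insert_iff, Set.mem_singleton_iff] at hy
          rcases hy with h | h
          · exact ⟨(1, 0), by simp [h]⟩
          · exact ⟨(0, 1), by simp [h]⟩
        | zero => exact ⟨(0, 0), by simp⟩
        | add y z hy hz hy' hz' =>
          obtain ⟨⟨a1, a2⟩, ha⟩ := hy'
          obtain ⟨⟨b1, b2⟩, hb⟩ := hz'
          exact ⟨(a1 + b1, a2 + b2), by simp only [add_zsmul] at *; linarith⟩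
        | neg y hy hy' =>
          obtain ⟨⟨a1, a2⟩, ha⟩ := hy'
          exact ⟨(-a1, -a2), by simp only [neg_zsmul] at *; linarith⟩
      
    rw [DenseRange, hr]
    exact hdense
  have hπsurj : DenseRange π := (QuotientAddGroup.mk'_surjective _).denseRange
  have hcomp : DenseRange (π ∘ fun p : ℤ × ℤ => (p.1 • β + p.2 • (1:ℝ))) :=
    hπsurj.comp hg hπcont
  have key : ∀ p : ℤ × ℤ, (π ∘ fun p : ℤ × ℤ => (p.1 • β + p.2 • (1:ℝ))) p
      = p.1 • (β : AddCircle (1:ℝ)) := by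
    intro p
    have h2 : ((p.2 • (1:ℝ) : ℝ) : AddCircle (1:ℝ)) = 0 := by
      rw [AddCircle.coe_eq_zero_iff]
      exact ⟨p.2, rfl⟩
    simp only [Function.comp_apply, hπ]
    rw [QuotientAddGroup.mk_add, AddCircle.coe_zsmul, h2, add_zero]
  have hz : DenseRange (fun z : ℤ => z • (β : AddCircle (1:ℝ))) := by
    refine Dense.mono ?_ hcomp
    rintro _ ⟨p, rfl⟩
    exact ⟨p.1, (key p).symm⟩
  -- Step 3: natural powers are dense
  have hn : DenseRange (fun n : ℕ => n • (β : AddCircle (1:ℝ))) :=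
    denseRange_zsmul_iff_nsmul.1 hz
  -- Step 4: extract a point of the orbit in (a, b)
  have hUopen : IsOpen (π '' Set.Ioo a b) :=
    QuotientAddGroup.isOpenMap_coe _ isOpen_Ioo
  have hUne : (π '' Set.Ioo a b).Nonempty :=
    ⟨π ((a+b)/2), ⟨(a+b)/2, by constructor <;> [skip; rfl]; constructor <;> linarith⟩⟩
  obtain ⟨n, hnU⟩ := hn.exists_mem_open hUopen hUne
  obtain ⟨x, hx, hxe⟩ := hnU
  -- π (n β) = π x, x ∈ (a,b) ⊆ (0,1)
  have hxeq : ((n:ℝ) * β : ℝ) = ((n • β : ℝ)) := by push_cast [nsmul_eq_mul]; ring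
  have hmem : (n:ℝ) * β - x ∈ AddSubgroup.zmultiples (1:ℝ) := by
    rw [← QuotientAddGroup.eq_iff_sub_mem]
    rw [hxeq]
    have : ((n • β : ℝ) : AddCircle (1:ℝ)) = n • (β : AddCircle (1:ℝ)) :=
      AddCircle.coe_nsmul 1
    rw [this, ← hxe]
  obtain ⟨z, hzeq⟩ := AddSubgroup.mem_zmultiples_iff.1 hmem
  have hfract : Int.fract ((n:ℝ) * β) = x := by
    have hxz : (n:ℝ) * β = (z:ℝ) + x := by
      have := hzeq
      rw [zsmul_eq_mul, mul_one] at this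
      linarith
    rw [hxz, Int.fract_intCast_add, Int.fract_eq_self.2 ⟨by linarith [hx.1], by linarith [hx.2]⟩]
  have hn1 : 1 ≤ n := by
    rcases Nat.eq_zero_or_pos n with rfl | h
    · exfalso
      rw [Nat.cast_zero, zero_mul, Int.fract_zero] at hfract
      have := hx.1
      linarith
    · exact h
  exact ⟨n, hn1, by rw [hfract]; exact hx.1, by rw [hfract]; exact hx.2⟩

noncomputable def ff (x : ℝ) (i : ℕ) : ℤ := ⌊x + (i:ℝ) * β⌋

noncomputable def gw (x : ℝ) (i : ℕ) : Fin 2 := if ff x (i+1) = ff x i then 0 else 1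

noncomputable def tθ (i : ℕ) : ℝ := 1 - Int.fract ((i:ℝ) * β)

noncomputable def cnt (m : ℕ) (x : ℝ) : ℕ :=
  ((Finset.Icc 1 m).filter (fun i => tθ i ≤ x)).card

lemma ff_zero {x : ℝ} (hx0 : 0 ≤ x) (hx1 : x < 1) : ff x 0 = 0 := by
  simp only [ff, Nat.cast_zero, zero_mul, add_zero]
  exact Int.floor_eq_zero_iff.2 ⟨hx0, hx1⟩

lemma ff_mono_x {x y : ℝ} (h : x ≤ y) (i : ℕ) : ff x i ≤ ff y i :=
  Int.floor_le_floor (by linarith)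

lemma ff_succ (x : ℝ) (i : ℕ) : ff x i ≤ ff x (i+1) ∧ ff x (i+1) ≤ ff x i + 1 := by
  have hb0 := β_pos
  have hb1 := β_lt_one
  constructor
  · apply Int.floor_le_floor
    push_cast
    nlinarith
  · have : ff x (i+1) ≤ ⌊(x + (i:ℝ)*β) + 1⌋ := by
      apply Int.floor_le_floor
      push_cast
      nlinarith
    rwa [Int.floor_add_one] at this

lemma tθ_mem {i : ℕ} (hi : 1 ≤ i) : 0 < tθ i ∧ tθ i < 1 := by
  have hirr := nat_mul_β_irrational hi
  have h1 : Int.fract ((i:ℝ)*β) < 1 := Int.fract_lt_one _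
  have h2 : 0 < Int.fract ((i:ℝ)*β) := by
    rw [Int.fract_pos]
    intro hc
    exact hirr.ne_int _ hc
  constructor <;> (simp only [tθ]; linarith)

lemma ff_split {x : ℝ} (hx0 : 0 ≤ x) (hx1 : x < 1) {i : ℕ} (hi : 1 ≤ i) :
    (tθ i ≤ x ∧ ff x i = ⌊(i:ℝ)*β⌋ + 1) ∨ (x < tθ i ∧ ff x i = ⌊(i:ℝ)*β⌋) := by
  have hsplit : (i:ℝ)*β = (⌊(i:ℝ)*β⌋ : ℝ) + Int.fract ((i:ℝ)*β) := by
    rw [Int.floor_add_fract]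
  have hff : ff x i = ⌊(i:ℝ)*β⌋ + ⌊x + Int.fract ((i:ℝ)*β)⌋ := by
    have he : x + (i:ℝ)*β = (⌊(i:ℝ)*β⌋ : ℝ) + (x + Int.fract ((i:ℝ)*β)) := by
      simp only [Int.fract]; ring
    simp only [ff]
    rw [he, Int.floor_intCast_add]
  have hf1 : Int.fract ((i:ℝ)*β) < 1 := Int.fract_lt_one _
  have hf0 : 0 ≤ Int.fract ((i:ℝ)*β) := Int.fract_nonneg _
  by_cases h : tθ i ≤ x
  · left
    refine ⟨h, ?_⟩
    rw [hff]
    have : ⌊x + Int.fract ((i:ℝ)*β)⌋ = 1 := by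
      rw [Int.floor_eq_iff]
      simp only [tθ] at h
      constructor
      · push_cast; linarith
      · push_cast; linarith
    omega
  · right
    push_neg at h
    refine ⟨h, ?_⟩
    rw [hff]
    have : ⌊x + Int.fract ((i:ℝ)*β)⌋ = 0 := by
      simp only [tθ] at h
      rw [Int.floor_eq_zero_iff, Set.mem_Ico]
      constructor <;> linarith
    omega

lemma ff_mem_iff {x : ℝ} (hx0 : 0 ≤ x) (hx1 : x < 1) {i : ℕ} (hi : 1 ≤ i) :
    tθ i ≤ x ↔ ff x i = ⌊(i:ℝ)*β⌋ + 1 := by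
  rcases ff_split hx0 hx1 hi with ⟨h1, h2⟩ | ⟨h1, h2⟩
  · exact ⟨fun _ => h2, fun _ => h1⟩
  · constructor
    · intro hc; linarith
    · intro hc; rw [hc] at h2; omega

lemma tθ_inj {i j : ℕ} (hi : 1 ≤ i) (hj : 1 ≤ j) (h : tθ i = tθ j) : i = j := by
  by_contra hne
  have hfr : Int.fract ((i:ℝ)*β) = Int.fract ((j:ℝ)*β) := by
    simp only [tθ] at h; linarith
  have : (i:ℝ)*β - (j:ℝ)*β = ((⌊(i:ℝ)*β⌋ - ⌊(j:ℝ)*β⌋ : ℤ) : ℝ) := by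
    have hi' := Int.floor_add_fract ((i:ℝ)*β)
    have hj' := Int.floor_add_fract ((j:ℝ)*β)
    push_cast
    linarith
  have hirr : Irrational ((i:ℝ)*β - (j:ℝ)*β) := by
    have : (i:ℝ)*β - (j:ℝ)*β = (((i:ℤ) - (j:ℤ) : ℤ) : ℝ) * β := by push_cast; ring
    rw [this]
    exact β_irrational.intCast_mul (by
      intro hc
      apply hne
      omega)
  exact hirr.ne_int _ this

lemma ff_eq_of_cnt_eq {m : ℕ} {x y : ℝ} (hx0 : 0 ≤ x) (hx1 : x < 1) (hy0 : 0 ≤ y)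
    (hy1 : y < 1) (h : cnt m x = cnt m y) : ∀ i ≤ m, ff x i = ff y i := by
  -- WLOG x ≤ y
  wlog hxy : x ≤ y generalizing x y
  · intro i hi
    exact (this hy0 hy1 hx0 hx1 h.symm (by linarith) i hi).symm
  have hsub : (Finset.Icc 1 m).filter (fun i => tθ i ≤ x)
      ⊆ (Finset.Icc 1 m).filter (fun i => tθ i ≤ y) := by
    intro i hif
    rw [Finset.mem_filter] at hif ⊢
    exact ⟨hif.1, le_trans hif.2 hxy⟩
  have heq : (Finset.Icc 1 m).filter (fun i => tθ i ≤ x)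
      = (Finset.Icc 1 m).filter (fun i => tθ i ≤ y) :=
    Finset.eq_of_subset_of_card_le hsub (le_of_eq h.symm)
  intro i hi
  rcases Nat.eq_zero_or_pos i with rfl | hipos
  · rw [ff_zero hx0 hx1, ff_zero hy0 hy1]
  · have hmem : tθ i ≤ x ↔ tθ i ≤ y := by
      constructor
      · intro hh
        have : i ∈ (Finset.Icc 1 m).filter (fun i => tθ i ≤ y) := by
          rw [← heq, Finset.mem_filter]
          exact ⟨Finset.mem_Icc.2 ⟨hipos, hi⟩, hh⟩
        exact (Finset.mem_filter.1 this).2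
      · intro hh
        have : i ∈ (Finset.Icc 1 m).filter (fun i => tθ i ≤ x) := by
          rw [heq, Finset.mem_filter]
          exact ⟨Finset.mem_Icc.2 ⟨hipos, hi⟩, hh⟩
        exact (Finset.mem_filter.1 this).2
    rcases ff_split hx0 hx1 hipos with ⟨h1, h2⟩ | ⟨h1, h2⟩ <;>
      rcases ff_split hy0 hy1 hipos with ⟨h3, h4⟩ | ⟨h3, h4⟩
    · rw [h2, h4]
    · exact absurd (hmem.1 h1) (by linarith)
    · exact absurd (hmem.2 h3) (by linarith)
    · rw [h2, h4]

lemma ff_eq_of_gw_eq {m : ℕ} {x y : ℝ} (hx0 : 0 ≤ x) (hx1 : x < 1) (hy0 : 0 ≤ y)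
    (hy1 : y < 1) (h : ∀ i < m, gw x i = gw y i) : ∀ i ≤ m, ff x i = ff y i := by
  intro i hi
  induction i with
  | zero => rw [ff_zero hx0 hx1, ff_zero hy0 hy1]
  | succ i ih =>
    have hprev : ff x i = ff y i := ih (by omega)
    have hgw := h i (by omega)
    simp only [gw] at hgw
    rcases ff_succ x i with ⟨hx2, hx3⟩
    rcases ff_succ y i with ⟨hy2, hy3⟩
    by_cases hc : ff x (i+1) = ff x i
    · rw [if_pos hc] at hgw
      by_cases hc2 : ff y (i+1) = ff y i
      · omega
      · rw [if_neg hc2] at hgw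
        exact absurd hgw (by decide)
    · rw [if_neg hc] at hgw
      by_cases hc2 : ff y (i+1) = ff y i
      · rw [if_pos hc2] at hgw
        exact absurd hgw (by decide)
      · omega

lemma gw_eq_of_ff {m : ℕ} {x y : ℝ} (h : ∀ i ≤ m, ff x i = ff y i) :
    ∀ i < m, gw x i = gw y i := by
  intro i hi
  simp only [gw, h i (by omega), h (i+1) (by omega)]

lemma cnt_eq_of_ff {m : ℕ} {x y : ℝ} (hx0 : 0 ≤ x) (hx1 : x < 1) (hy0 : 0 ≤ y)
    (hy1 : y < 1) (h : ∀ i ≤ m, ff x i = ff y i) : cnt m x = cnt m y := by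
  unfold cnt
  congr 1
  apply Finset.filter_congr
  intro i hi
  rw [Finset.mem_Icc] at hi
  rw [ff_mem_iff hx0 hx1 hi.1, ff_mem_iff hy0 hy1 hi.1, h i hi.2]

lemma cnt_le {m : ℕ} (x : ℝ) : cnt m x ≤ m := by
  unfold cnt
  calc ((Finset.Icc 1 m).filter (fun i => tθ i ≤ x)).card ≤ (Finset.Icc 1 m).card :=
        Finset.card_filter_le _ _
    _ = m := by rw [Nat.card_Icc]; omega

lemma exists_cnt {m : ℕ} (hm : 1 ≤ m) {j : ℕ} (hj : j ≤ m) :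
    ∃ n : ℕ, 1 ≤ n ∧ cnt m (Int.fract ((n:ℝ) * β)) = j := by
  classical
  set T : Finset ℝ := (Finset.Icc 1 m).image tθ with hT
  have hinj : Set.InjOn tθ ↑(Finset.Icc 1 m) := by
    intro i hi k hk h
    rw [Finset.coe_Icc, Set.mem_Icc] at hi hk
    exact tθ_inj hi.1 hk.1 h
  have hTcard : T.card = m := by
    rw [hT, Finset.card_image_of_injOn hinj, Nat.card_Icc]; omega
  set e := T.orderIsoOfFin hTcard with he
  have hrange : ∀ i : Fin m, 0 < ((e i : ℝ)) ∧ ((e i : ℝ)) < 1 := by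
    intro i
    obtain ⟨idx, hidx, hidxe⟩ := Finset.mem_image.1 ((e i).2)
    rw [Finset.mem_Icc] at hidx
    rw [← hidxe]
    exact tθ_mem hidx.1
  have hm0 : 0 < m := hm
  set a : ℝ := if h : 0 < j then (e ⟨j-1, by omega⟩ : ℝ) else (e ⟨0, hm0⟩ : ℝ)/2 with ha_def
  set b : ℝ := if h : j < m then (e ⟨j, h⟩ : ℝ) else 1 with hb_def
  have ha : 0 < a := by
    rw [ha_def]
    split
    · exact (hrange _).1
    · have := (hrange ⟨0, hm0⟩).1; linarith
  have hb1 : b ≤ 1 := by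
    rw [hb_def]
    split
    · exact le_of_lt (hrange _).2
    · exact le_refl 1
  have hab : a < b := by
    rw [ha_def, hb_def]
    by_cases h0 : 0 < j <;> by_cases h1 : j < m
    · rw [dif_pos h0, dif_pos h1]
      have : (⟨j-1, by omega⟩ : Fin m) < ⟨j, h1⟩ := by
        rw [Fin.mk_lt_mk]; omega
      exact_mod_cast (e.lt_iff_lt.2 this)
    · rw [dif_pos h0, dif_neg h1]
      exact (hrange _).2
    · rw [dif_neg h0, dif_pos h1]
      have : 0 < (e ⟨0, hm0⟩ : ℝ) := (hrange _).1
      have hjeq : j = 0 := by omega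
      have : (⟨0, hm0⟩ : Fin m) = ⟨j, h1⟩ := by simp [hjeq]
      rw [← this]
      linarith [(hrange ⟨0, hm0⟩).1]
    · omega
  obtain ⟨n, hn1, hx1, hx2⟩ := orbit_dense' ha hb1 hab
  set x := Int.fract ((n:ℝ) * β) with hx
  refine ⟨n, hn1, ?_⟩
  -- Claim A
  have claimA : ∀ i : Fin m, ((e i : ℝ) ≤ x ↔ (i : ℕ) < j) := by
    intro i
    constructor
    · intro hle
      by_contra hge
      push_neg at hge
      have hjm : j < m := by omega
      have hbe : b = (e ⟨j, hjm⟩ : ℝ) := by rw [hb_def, dif_pos hjm]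
      have : (⟨j, hjm⟩ : Fin m) ≤ i := by rw [Fin.mk_le_mk]; omega
      have h2 : (e ⟨j, hjm⟩ : ℝ) ≤ (e i : ℝ) := by exact_mod_cast e.le_iff_le.2 this
      rw [← hbe] at h2
      linarith
    · intro hlt
      have h0 : 0 < j := by omega
      have hae : a = (e ⟨j-1, by omega⟩ : ℝ) := by rw [ha_def, dif_pos h0]
      have : i ≤ (⟨j-1, by omega⟩ : Fin m) := by rw [Fin.le_def]; simp; omega
      have h2 : (e i : ℝ) ≤ (e ⟨j-1, by omega⟩ : ℝ) := by exact_mod_cast e.le_iff_le.2 this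
      rw [← hae] at h2
      linarith
  -- compute the count
  have hfil : T.filter (fun y => y ≤ x)
      = Finset.image (fun i : Fin m => (e i : ℝ)) (Finset.univ.filter (fun i => (i:ℕ) < j)) := by
    ext y
    constructor
    · intro hy
      obtain ⟨hyT, hyx⟩ := Finset.mem_filter.1 hy
      refine Finset.mem_image.2 ⟨e.symm ⟨y, hyT⟩, Finset.mem_filter.2 ⟨Finset.mem_univ _, ?_⟩, ?_⟩
      · rw [← claimA]; simpa using hyx
      · simp
    · intro hy
      obtain ⟨i, hi, rfl⟩ := Finset.mem_image.1 hy
      exact Finset.mem_filter.2 ⟨(e i).2, (claimA i).2 (Finset.mem_filter.1 hi).2⟩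
  have hcnt1 : cnt m x = (T.filter (fun y => y ≤ x)).card := by
    unfold cnt
    rw [hT, Finset.filter_image]
    rw [Finset.card_image_of_injOn (hinj.mono (fun i hi => by
      rw [Finset.coe_filter] at hi
      exact hi.1))]
  rw [hcnt1, hfil]
  rw [Finset.card_image_of_injOn (fun p _ q _ hpq => e.injective (Subtype.ext hpq))]
  have : (Finset.univ.filter (fun i : Fin m => (i:ℕ) < j))
      = (Finset.range j).attachFin (fun p hp => by rw [Finset.mem_range] at hp; omega) := by
    ext i
    simp [Finset.mem_attachFin]
  rw [this, Finset.card_attachFin, Finset.card_range]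

lemma floor_fract_add (y z : ℝ) : ⌊Int.fract y + z⌋ = ⌊y + z⌋ - ⌊y⌋ := by
  have h : Int.fract y + z = ((-⌊y⌋ : ℤ) : ℝ) + (y + z) := by
    simp only [Int.fract]; push_cast; ring
  rw [h, Int.floor_intCast_add]; ring

lemma fibWord_block (k i : ℕ) :
    fibWord (k + i) = gw (Int.fract (((k:ℝ) + 1) * β)) i := by
  rw [fibWord_eq_floor]
  simp only [gw, ff]
  have h1 : ⌊Int.fract (((k:ℝ) + 1) * β) + ((i:ℝ) + 1) * β⌋
      = ⌊(((k:ℕ) + i : ℕ):ℝ) * β + 2 * β⌋ - ⌊((k:ℝ) + 1) * β⌋ := by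
    rw [floor_fract_add]
    congr 2
    push_cast; ring
  have h2 : ⌊Int.fract (((k:ℝ) + 1) * β) + (i:ℝ) * β⌋
      = ⌊(((k:ℕ) + i : ℕ):ℝ) * β + 1 * β⌋ - ⌊((k:ℝ) + 1) * β⌋ := by
    rw [floor_fract_add]
    congr 2
    push_cast; ring
  have e1 : ((k + i : ℕ):ℝ) * β + 2 * β = (((k + i : ℕ):ℝ) + 2) * β := by ring
  have e2 : ((k + i : ℕ):ℝ) * β + 1 * β = (((k + i : ℕ):ℝ) + 1) * β := by ring
  by_cases h : ⌊((((k + i : ℕ)):ℝ) + 2) * β⌋ = ⌊((((k + i : ℕ)):ℝ) + 1) * β⌋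
  · rw [if_pos (by push_cast at h ⊢; exact h)]; refine (if_pos ?_).symm
    push_cast at h h1 h2 ⊢
    rw [h1, h2]
    rw [show ((k:ℝ) + (i:ℝ)) * β + 2 * β = (((k:ℝ) + (i:ℝ)) + 2) * β by ring,
        show ((k:ℝ) + (i:ℝ)) * β + 1 * β = (((k:ℝ) + (i:ℝ)) + 1) * β by ring]
    omega
  · rw [if_neg (by push_cast at h ⊢; exact h)]; refine (if_neg ?_).symm
    push_cast at h h1 h2 ⊢
    rw [h1, h2]
    rw [show ((k:ℝ) + (i:ℝ)) * β + 2 * β = (((k:ℝ) + (i:ℝ)) + 2) * β by ring,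
        show ((k:ℝ) + (i:ℝ)) * β + 1 * β = (((k:ℝ) + (i:ℝ)) + 1) * β by ring]
    omega

/-- The Fibonacci word is Sturmian: its complexity function satisfies `p(m) = m + 1` for every
`m ≥ 1`. -/
theorem stmt_9 : ∀ m : ℕ, 1 ≤ m → fibComplexity m = m + 1 := by
  intro m hm
  classical
  -- orbit points
  set X : ℕ → ℝ := fun k => Int.fract (((k:ℝ) + 1) * β) with hXdef
  have hX0 : ∀ k, 0 ≤ X k := fun k => Int.fract_nonneg _
  have hX1 : ∀ k, X k < 1 := fun k => Int.fract_lt_one _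
  have hblock : ∀ k (i : ℕ), fibWord (k + i) = gw (X k) i := fun k i => fibWord_block k i
  -- choose representatives
  have hrep : ∀ j : ℕ, ∃ k : ℕ, cnt m (X k) = min j m := by
    intro j
    obtain ⟨n, hn1, hcnt⟩ := exists_cnt hm (min_le_right j m)
    refine ⟨n - 1, ?_⟩
    have : ((n - 1 : ℕ):ℝ) + 1 = (n:ℝ) := by
      have : (1:ℕ) ≤ n := hn1
      push_cast [Nat.cast_sub this]
      ring
    rw [hXdef]
    simp only []
    rw [this]
    exact hcnt
  choose rep hrepc using hrep
  set V : ℕ → (Fin m → Fin 2) := fun j => fun i => fibWord (rep j + (i:ℕ)) with hV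
  have hVg : ∀ j (i : Fin m), V j i = gw (X (rep j)) (i:ℕ) := fun j i => hblock _ _
  -- the set of blocks equals the image finset
  have hset : {v : Fin m → Fin 2 | ∃ k : ℕ, ∀ i : Fin m, v i = fibWord (k + (i : ℕ))}
      = ↑((Finset.range (m+1)).image V) := by
    ext v
    simp only [Set.mem_setOf_eq, Finset.coe_image, Set.mem_image, Finset.mem_coe,
      Finset.mem_range]
    constructor
    · rintro ⟨k, hk⟩
      set j := cnt m (X k) with hj
      have hjm : j ≤ m := cnt_le _
      refine ⟨j, by omega, ?_⟩
      have hcntj : cnt m (X (rep j)) = j := by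
        rw [hrepc j]; omega
      have hffeq : ∀ i ≤ m, ff (X (rep j)) i = ff (X k) i :=
        ff_eq_of_cnt_eq (hX0 _) (hX1 _) (hX0 _) (hX1 _) (by rw [hcntj])
      have hgweq := gw_eq_of_ff hffeq
      funext i
      rw [hVg j i, hgweq (i:ℕ) i.2, ← hblock, ← hk]
    · rintro ⟨j, _, rfl⟩
      exact ⟨rep j, fun i => rfl⟩
  rw [fibComplexity, hset, Set.ncard_coe_finset]
  rw [Finset.card_image_of_injOn, Finset.card_range]
  intro j hj j' hj' hVeq
  rw [Finset.coe_range, Set.mem_Iio] at hj hj'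
  have hgweq : ∀ i < m, gw (X (rep j)) i = gw (X (rep j')) i := by
    intro i hi
    have := congrFun hVeq (⟨i, hi⟩ : Fin m)
    rw [hVg j ⟨i, hi⟩, hVg j' ⟨i, hi⟩] at this
    exact this
  have hff := ff_eq_of_gw_eq (hX0 _) (hX1 _) (hX0 _) (hX1 _) hgweq
  have hcnt := cnt_eq_of_ff (hX0 _) (hX1 _) (hX0 _) (hX1 _) hff
  rw [hrepc j, hrepc j'] at hcnt
  omega
end

section
/- Let g ≥ 2 be an integer. Then the Liouville–Fredholm number θ = Σ_{n≥0} g^{−n²} is irrational. -/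
set_option maxHeartbeats 1000000 in
/-- For any integer `g ≥ 2`, the Liouville–Fredholm number `θ = Σ_{n≥0} g^{−n²}` is
irrational. -/
theorem stmt_18 (g : ℕ) (hg : 2 ≤ g) :
    Irrational (∑' n : ℕ, (1 / (g : ℝ)) ^ (n ^ 2)) := by
  set r : ℝ := 1 / (g : ℝ) with hr_def
  have hg0 : (0 : ℝ) < g := by positivity
  have hg2 : (2 : ℝ) ≤ g := by exact_mod_cast hg
  have hr0 : 0 < r := by positivity
  have hr_half : r ≤ 1 / 2 := by
    rw [hr_def, div_le_div_iff₀ hg0 (by norm_num)]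
    linarith
  have hr1 : r < 1 := lt_of_le_of_lt hr_half (by norm_num)
  have hsum : Summable fun n : ℕ => r ^ (n ^ 2) := by
    refine Summable.of_nonneg_of_le (fun n => by positivity)
      (fun n => pow_le_pow_of_le_one hr0.le hr1.le (Nat.le_self_pow two_ne_zero n))
      (summable_geometric_of_lt_one hr0.le hr1)
  set x : ℝ := ∑' n : ℕ, r ^ (n ^ 2) with hx_def
  rw [Irrational]
  intro ⟨q, hq⟩
  set b : ℕ := q.den with hb_def
  have hb0 : 0 < b := q.pos
  set k : ℕ := b with hk_def
  -- key: 2*b < g^(2k+1)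
  have hbig : 2 * b < g ^ (2 * k + 1) := by
    calc 2 * b < 2 ^ (2 * b) := Nat.lt_two_pow_self
    _ ≤ 2 ^ (2 * k + 1) := Nat.pow_le_pow_right (by norm_num) (by omega)
    _ ≤ g ^ (2 * k + 1) := Nat.pow_le_pow_left hg _
  -- split the sum
  have hsplit := Summable.sum_add_tsum_nat_add (f := fun n : ℕ => r ^ (n ^ 2)) (k + 1) hsum
  set T : ℝ := ∑' n : ℕ, r ^ ((n + (k + 1)) ^ 2) with hT_def
  have hsumT : Summable fun n : ℕ => r ^ ((n + (k + 1)) ^ 2) :=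
    (summable_nat_add_iff (f := fun n : ℕ => r ^ (n ^ 2)) (k + 1)).2 hsum
  have hT_pos : 0 < T := Summable.tsum_pos hsumT (fun n => by positivity) 0 (by positivity)
  -- tail bound: T ≤ 2 * r^((k+1)^2)
  have hT_le : T ≤ 2 * r ^ ((k + 1) ^ 2) := by
    have h1 : T ≤ ∑' n : ℕ, r ^ ((k + 1) ^ 2) * r ^ n := by
      refine Summable.tsum_le_tsum (fun n => ?_) hsumT (by
        exact (summable_geometric_of_lt_one hr0.le hr1).mul_left _)
      rw [← pow_add]
      refine pow_le_pow_of_le_one hr0.le hr1.le ?_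
      have hexp : (n + (k + 1)) ^ 2 = ((k + 1) ^ 2 + n) + (n * n + 2 * n * k + n) := by ring
      omega
    rw [tsum_mul_left, tsum_geometric_of_lt_one hr0.le hr1] at h1
    have h2 : (1 - r)⁻¹ ≤ 2 := by
      rw [inv_le_comm₀ (by linarith) (by norm_num)]
      linarith
    calc T ≤ r ^ ((k + 1) ^ 2) * (1 - r)⁻¹ := h1
    _ ≤ r ^ ((k + 1) ^ 2) * 2 := by
        exact mul_le_mul_of_nonneg_left h2 (by positivity)
    _ = 2 * r ^ ((k + 1) ^ 2) := by ring
  -- the integer z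
  set z : ℤ := q.num * g ^ (k ^ 2) - b * ∑ n ∈ Finset.range (k + 1), (g : ℤ) ^ (k ^ 2 - n ^ 2)
    with hz_def
  have hgz : (g : ℝ) ≠ 0 := ne_of_gt hg0
  have hbx : (b : ℝ) * x = q.num := by
    rw [← hq]
    push_cast
    rw [mul_comm]
    rw [Rat.cast_def]
    field_simp
    rfl
  have hS : (g : ℝ) ^ (k ^ 2) * ∑ n ∈ Finset.range (k + 1), r ^ (n ^ 2)
      = ∑ n ∈ Finset.range (k + 1), (g : ℝ) ^ (k ^ 2 - n ^ 2) := by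
    rw [Finset.mul_sum]
    refine Finset.sum_congr rfl fun n hn => ?_
    have hnk : n ^ 2 ≤ k ^ 2 := by
      have : n ≤ k := by simpa using Nat.lt_succ_iff.mp (Finset.mem_range.mp hn)
      exact Nat.pow_le_pow_left this 2
    rw [hr_def, div_pow, one_pow, mul_one_div]
    exact (pow_sub₀ _ hgz hnk).symm
  have hzD : (z : ℝ) = b * g ^ (k ^ 2) * T := by
    have hsplit' : (∑ n ∈ Finset.range (k + 1), r ^ (n ^ 2)) + T = x := hsplit
    have hxT : T = x - ∑ n ∈ Finset.range (k + 1), r ^ (n ^ 2) := by linarith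
    rw [hz_def]
    push_cast
    rw [hxT, ← hbx, ← hS]
    ring
  have hz_pos : (0 : ℝ) < z := by
    rw [hzD]; positivity
  have hz_lt : (z : ℝ) < 1 := by
    rw [hzD]
    have key : (g : ℝ) ^ (k ^ 2) * r ^ ((k + 1) ^ 2) = r ^ (2 * k + 1) := by
      have : (k + 1) ^ 2 = k ^ 2 + (2 * k + 1) := by ring
      rw [this, pow_add, hr_def]
      field_simp
      rw [← mul_pow, mul_one_div_cancel hgz, one_pow]
    calc (b : ℝ) * g ^ (k ^ 2) * T ≤ (b : ℝ) * g ^ (k ^ 2) * (2 * r ^ ((k + 1) ^ 2)) := by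
          exact mul_le_mul_of_nonneg_left hT_le (by positivity)
    _ = 2 * b * (g ^ (k ^ 2) * r ^ ((k + 1) ^ 2)) := by ring
    _ = 2 * b * r ^ (2 * k + 1) := by rw [key]
    _ < 1 := by
        rw [hr_def, div_pow, one_pow, mul_one_div, div_lt_one (by positivity)]
        exact_mod_cast hbig
  have h1 : 0 < z := by exact_mod_cast hz_pos
  have h2 : z < 1 := by exact_mod_cast hz_lt
  omega
end
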